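/- The dual of the cyclic group J_A generated by the exponential grading element is the special linear subgroup of the transposed matrix: (J_A)^T = SL_{Aᵀ}. -/

import Mathlib

open scoped BigOperators
open Matrix

noncomputable section

abbrev QZ : Type := AddCircle (1 : ℚ)

def qz : ℚ →+ QZ := QuotientAddGroup.mk' _

def GA {n : ℕ} (A : Matrix (Fin n) (Fin n) ℤ) : AddSubgroup (Fin n → QZ) where
  carrier := {g | ∀ i, ∑ j, A i j • g j = 0}
  zero_mem' := by intro i; simp
  add_mem' := by
    intro a b ha hb i
    simp only [Pi.add_apply, smul_add, Finset.sum_add_distrib, ha i, hb i, add_zero]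
  neg_mem' := by
    intro a ha i
    simp only [Pi.neg_apply, smul_neg, Finset.sum_neg_distrib, ha i, neg_zero]

def SLA {n : ℕ} (A : Matrix (Fin n) (Fin n) ℤ) : AddSubgroup (Fin n → QZ) where
  carrier := {g | g ∈ GA A ∧ ∑ i, g i = 0}
  zero_mem' := ⟨(GA A).zero_mem, by simp⟩
  add_mem' := by
    intro a b ha hb
    exact ⟨(GA A).add_mem ha.1 hb.1, by simp [Pi.add_apply, Finset.sum_add_distrib, ha.2, hb.2]⟩
  neg_mem' := by
    intro a ha
    exact ⟨(GA A).neg_mem ha.1, by simp [Pi.neg_apply, Finset.sum_neg_distrib, ha.2]⟩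

def jA {n : ℕ} (A : Matrix (Fin n) (Fin n) ℤ) : Fin n → QZ :=
  fun i => qz (((A.map (Int.cast : ℤ → ℚ))⁻¹).mulVec 1 i)

/-- `v : ℚ^n` is a lift of `g : (ℚ/ℤ)^n`. -/
def IsLift {n : ℕ} (v : Fin n → ℚ) (g : Fin n → QZ) : Prop := ∀ i, qz (v i) = g i

lemma qz_eq_zero_iff (q : ℚ) : qz q = 0 ↔ ∃ m : ℤ, (m : ℚ) = q := by
  constructor
  · intro h
    have : q ∈ AddSubgroup.zmultiples (1 : ℚ) := by
      rwa [qz, QuotientAddGroup.mk'_apply, QuotientAddGroup.eq_zero_iff] at h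
    obtain ⟨k, hk⟩ := this
    exact ⟨k, by simpa using hk⟩
  · rintro ⟨m, rfl⟩
    rw [qz, QuotientAddGroup.mk'_apply, QuotientAddGroup.eq_zero_iff]
    exact ⟨m, by simp⟩

lemma exists_lift {n : ℕ} (g : Fin n → QZ) : ∃ v : Fin n → ℚ, IsLift v g := by
  choose v hv using fun i => QuotientAddGroup.mk'_surjective _ (g i)
  exact ⟨v, hv⟩

lemma row_int {n : ℕ} {A : Matrix (Fin n) (Fin n) ℤ} {h : Fin n → QZ} (hh : h ∈ GA A)
    {vh : Fin n → ℚ} (hl : IsLift vh h) (i : Fin n) :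
    ∃ m : ℤ, (m : ℚ) = ∑ j, (A i j : ℚ) * vh j := by
  have h0 : qz (∑ j, (A i j : ℚ) * vh j) = 0 := by
    have := hh i
    calc qz (∑ j, (A i j : ℚ) * vh j) = ∑ j, A i j • qz (vh j) := by
          rw [map_sum]
          refine Finset.sum_congr rfl fun j _ => ?_
          rw [← map_zsmul qz, zsmul_eq_mul]
      _ = ∑ j, A i j • h j := by
          refine Finset.sum_congr rfl fun j _ => by rw [hl j]
      _ = 0 := hh i
  exact (qz_eq_zero_iff _).1 h0

/-- The Berglund–Hübsch dual `H^T` of a subgroup `H ≤ G_A`: all `g ∈ G_{Aᵀ}` such that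
for every `h ∈ H` and all lifts `ĝ, ĥ ∈ ℚ^n` of `g, h`, the number `∑ᵢⱼ ĝᵢ Aᵢⱼ ĥⱼ` is an
integer. -/
def dual {n : ℕ} (A : Matrix (Fin n) (Fin n) ℤ) (H : AddSubgroup (Fin n → QZ))
    (hH : H ≤ GA A) : AddSubgroup (Fin n → QZ) where
  carrier := {g | g ∈ GA Aᵀ ∧ ∀ h ∈ H, ∀ vg vh : Fin n → ℚ, IsLift vg g → IsLift vh h →
    ∃ m : ℤ, (m : ℚ) = ∑ i, ∑ j, vg i * (A i j : ℚ) * vh j}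
  zero_mem' := by
    refine ⟨(GA Aᵀ).zero_mem, ?_⟩
    intro h hh vg vh lg lh
    have hg : ∀ i, ∃ m : ℤ, (m : ℚ) = vg i := by
      intro i
      exact (qz_eq_zero_iff _).1 ((lg i).trans rfl)
    choose mg hmg using hg
    choose c hc using fun i => row_int (hH hh) lh i
    refine ⟨∑ i, mg i * c i, ?_⟩
    push_cast
    calc (∑ i, (mg i : ℚ) * (c i : ℚ))
        = ∑ i, vg i * ∑ j, (A i j : ℚ) * vh j := by
          refine Finset.sum_congr rfl fun i _ => by rw [hmg i, hc i]
      _ = ∑ i, ∑ j, vg i * (A i j : ℚ) * vh j := by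
          refine Finset.sum_congr rfl fun i _ => ?_
          rw [Finset.mul_sum]
          exact Finset.sum_congr rfl fun j _ => (mul_assoc _ _ _).symm
  add_mem' := by
    intro a b ha hb
    refine ⟨(GA Aᵀ).add_mem ha.1 hb.1, ?_⟩
    intro h hh vg vh lg lh
    obtain ⟨va, hva⟩ := exists_lift a
    have hvb : IsLift (vg - va) b := by
      intro i
      have : qz (vg i - va i) = qz (vg i) - qz (va i) := map_sub qz _ _
      rw [Pi.sub_apply, this, lg i, hva i, Pi.add_apply, add_sub_cancel_left]
    obtain ⟨m₁, e₁⟩ := ha.2 h hh va vh hva lh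
    obtain ⟨m₂, e₂⟩ := hb.2 h hh (vg - va) vh hvb lh
    refine ⟨m₁ + m₂, ?_⟩
    push_cast
    rw [e₁, e₂, ← Finset.sum_add_distrib]
    refine Finset.sum_congr rfl fun i _ => ?_
    rw [← Finset.sum_add_distrib]
    refine Finset.sum_congr rfl fun j _ => ?_
    simp only [Pi.sub_apply]
    ring
  neg_mem' := by
    intro a ha
    refine ⟨(GA Aᵀ).neg_mem ha.1, ?_⟩
    intro h hh vg vh lg lh
    have hvg : IsLift (-vg) a := by
      intro i
      have : qz (-(vg i)) = - qz (vg i) := map_neg qz _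
      rw [Pi.neg_apply, this, lg i, Pi.neg_apply, neg_neg]
    obtain ⟨m, e⟩ := ha.2 h hh (-vg) vh hvg lh
    refine ⟨-m, ?_⟩
    push_cast
    rw [e, ← Finset.sum_neg_distrib]
    refine Finset.sum_congr rfl fun i _ => ?_
    rw [← Finset.sum_neg_distrib]
    refine Finset.sum_congr rfl fun j _ => ?_
    simp only [Pi.neg_apply]
    ring

lemma dual_le {n : ℕ} (A : Matrix (Fin n) (Fin n) ℤ) (H : AddSubgroup (Fin n → QZ))
    (hH : H ≤ GA A) : dual A H hH ≤ GA Aᵀ := fun _ hg => hg.1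

lemma SLA_le {n : ℕ} (A : Matrix (Fin n) (Fin n) ℤ) : SLA A ≤ GA A := fun _ hg => hg.1


lemma qz_intCast (m : ℤ) : qz (m : ℚ) = 0 := by
  rw [qz, QuotientAddGroup.mk'_apply, QuotientAddGroup.eq_zero_iff]
  exact ⟨m, by simp⟩

lemma jA_mem {n : ℕ} (A : Matrix (Fin n) (Fin n) ℤ) (hA : A.det ≠ 0) : jA A ∈ GA A := by
  have hdet : (A.map (Int.cast : ℤ → ℚ)).det ≠ 0 := by
    have h1 : (A.map (Int.cast : ℤ → ℚ)).det = (A.det : ℚ) := by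
      rw [show (Int.cast : ℤ → ℚ) = ⇑(Int.castRingHom ℚ) from rfl,
        ← RingHom.mapMatrix_apply, ← RingHom.map_det]
    rw [h1]
    exact_mod_cast hA
  have hBinv : (A.map (Int.cast : ℤ → ℚ)) * (A.map (Int.cast : ℤ → ℚ))⁻¹ = 1 :=
    Matrix.mul_nonsing_inv _ (isUnit_iff_ne_zero.mpr hdet)
  show ∀ i, ∑ j, A i j • jA A j = 0
  intro i
  have key : ∑ j, A i j • jA A j
      = qz (∑ j, (A.map (Int.cast : ℤ → ℚ)) i j *
          ((A.map (Int.cast : ℤ → ℚ))⁻¹).mulVec 1 j) := by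
    rw [map_sum]
    refine Finset.sum_congr rfl fun j _ => ?_
    rw [jA, ← map_zsmul qz, zsmul_eq_mul]
    rfl
  rw [key]
  have h2 : ∑ j, (A.map (Int.cast : ℤ → ℚ)) i j *
        ((A.map (Int.cast : ℤ → ℚ))⁻¹).mulVec 1 j
      = ((A.map (Int.cast : ℤ → ℚ)) * (A.map (Int.cast : ℤ → ℚ))⁻¹).mulVec 1 i := by
    rw [← Matrix.mulVec_mulVec]
    simp [Matrix.mulVec, dotProduct]
  rw [h2, hBinv, Matrix.one_mulVec]
  simpa using qz_intCast 1

lemma JA_le {n : ℕ} (A : Matrix (Fin n) (Fin n) ℤ) (hA : A.det ≠ 0) :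
    AddSubgroup.zmultiples (jA A) ≤ GA A := by
  intro x hx
  rw [AddSubgroup.mem_zmultiples_iff] at hx
  obtain ⟨k, rfl⟩ := hx
  exact AddSubgroup.zsmul_mem _ (jA_mem A hA) k

/-- `(J_A)^T = SL_{Aᵀ}`, where `J_A` is the cyclic subgroup generated by the
exponential grading element `j_A`. -/
theorem dual_JA_eq_SLA_transpose {n : ℕ} (hn : 1 ≤ n) (A : Matrix (Fin n) (Fin n) ℤ)
    (hA : A.det ≠ 0) :
    dual A (AddSubgroup.zmultiples (jA A)) (JA_le A hA) = SLA Aᵀ := by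
  have hdet : (A.map (Int.cast : ℤ → ℚ)).det ≠ 0 := by
    have h1 : (A.map (Int.cast : ℤ → ℚ)).det = (A.det : ℚ) := by
      rw [show (Int.cast : ℤ → ℚ) = ⇑(Int.castRingHom ℚ) from rfl,
        ← RingHom.mapMatrix_apply, ← RingHom.map_det]
    rw [h1]; exact_mod_cast hA
  have hBinv : (A.map (Int.cast : ℤ → ℚ)) * (A.map (Int.cast : ℤ → ℚ))⁻¹ = 1 :=
    Matrix.mul_nonsing_inv _ (isUnit_iff_ne_zero.mpr hdet)
  set w : Fin n → ℚ := ((A.map (Int.cast : ℤ → ℚ))⁻¹).mulVec 1 with hw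
  have hrow : ∀ i, ∑ j, (A i j : ℚ) * w j = 1 := by
    intro i
    have h2 : ∑ j, (A.map (Int.cast : ℤ → ℚ)) i j * w j
        = ((A.map (Int.cast : ℤ → ℚ)) * (A.map (Int.cast : ℤ → ℚ))⁻¹).mulVec 1 i := by
      rw [hw, ← Matrix.mulVec_mulVec]
      simp [Matrix.mulVec, dotProduct]
    have h3 : ∑ j, (A i j : ℚ) * w j = ∑ j, (A.map (Int.cast : ℤ → ℚ)) i j * w j := rfl
    rw [h3, h2, hBinv, Matrix.one_mulVec]
    rfl
  have hwlift : IsLift w (jA A) := fun i => rfl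
  apply le_antisymm
  · intro g hg
    obtain ⟨hg1, hg2⟩ := hg
    obtain ⟨vg, hvg⟩ := exists_lift g
    refine ⟨hg1, ?_⟩
    obtain ⟨m, hm⟩ := hg2 (jA A) (AddSubgroup.mem_zmultiples _) vg w hvg hwlift
    have e1 : ∑ i, ∑ j, vg i * (A i j : ℚ) * w j = ∑ i, vg i := by
      refine Finset.sum_congr rfl fun i _ => ?_
      calc ∑ j, vg i * (A i j : ℚ) * w j = vg i * ∑ j, (A i j : ℚ) * w j := by
            rw [Finset.mul_sum]
            exact Finset.sum_congr rfl fun j _ => mul_assoc _ _ _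
        _ = vg i := by rw [hrow, mul_one]
    have e2 : ∑ i, g i = qz (∑ i, vg i) := by
      rw [map_sum]
      exact Finset.sum_congr rfl fun i _ => (hvg i).symm
    rw [e2, ← e1, ← hm]
    exact qz_intCast m
  · intro g hg
    obtain ⟨hg1, hg2⟩ := hg
    refine ⟨hg1, ?_⟩
    intro h hh vg vh lg lh
    obtain ⟨k, rfl⟩ := AddSubgroup.mem_zmultiples_iff.1 hh
    choose c hc using fun j => row_int (A := Aᵀ) hg1 lg j
    simp only [Matrix.transpose_apply] at hc
    obtain ⟨s, hs⟩ : ∃ s : ℤ, (s : ℚ) = ∑ i, vg i := by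
      apply (qz_eq_zero_iff _).1
      rw [map_sum, Finset.sum_congr rfl fun i _ => lg i]
      exact hg2
    have hmm : ∀ j, ∃ m : ℤ, (m : ℚ) = vh j - k * w j := by
      intro j
      apply (qz_eq_zero_iff _).1
      rw [map_sub, lh j]
      have : (k • jA A) j = qz (k * w j) := by
        rw [Pi.smul_apply, ← zsmul_eq_mul, map_zsmul]
        rfl
      rw [this, sub_self]
    choose m hm using hmm
    refine ⟨k * s + ∑ j, c j * m j, ?_⟩
    have hvh : ∀ j, vh j = (k : ℚ) * w j + m j := by
      intro j
      have := hm j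
      linarith
    have expand : ∀ i, ∑ j, vg i * (A i j : ℚ) * vh j
        = (k : ℚ) * vg i + ∑ j, (A i j : ℚ) * vg i * m j := by
      intro i
      have : ∑ j, vg i * (A i j : ℚ) * vh j
          = ∑ j, ((k : ℚ) * (vg i * ((A i j : ℚ) * w j)) + (A i j : ℚ) * vg i * m j) := by
        refine Finset.sum_congr rfl fun j _ => ?_
        rw [hvh j]; ring
      rw [this, Finset.sum_add_distrib]
      congr 1
      rw [← Finset.mul_sum, ← Finset.mul_sum, hrow, mul_one]
    calc ((k * s + ∑ j, c j * m j : ℤ) : ℚ)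
        = (k : ℚ) * s + ∑ j, (c j : ℚ) * (m j : ℚ) := by push_cast; ring
      _ = ∑ i, ((k : ℚ) * vg i + ∑ j, (A i j : ℚ) * vg i * m j) := by
          rw [Finset.sum_add_distrib, ← Finset.mul_sum, ← hs]
          congr 1
          rw [Finset.sum_comm]
          refine Finset.sum_congr rfl fun j _ => ?_
          rw [← Finset.sum_mul, ← hc j]
      _ = ∑ i, ∑ j, vg i * (A i j : ℚ) * vh j :=
          (Finset.sum_congr rfl fun i _ => (expand i).symm)

end
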